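/- arXiv:2512.11087 — 6 statements merged into one kernel-verified Lean document; each statement's English description precedes it below -/
import Mathlib

section
/- Strong duality holds for box-constrained linear minimization with one linear constraint: for a ∈ ℝⁿ, c ∈ ℝ, g ∈ ℝⁿ, h ∈ ℝ, center x̂ ∈ ℝⁿ and radii ε ∈ ℝⁿ with ε ≥ 0, if the feasible set {x : |xⱼ - x̂ⱼ| ≤ εⱼ for all j, and gᵀx + h ≤ 0} is nonempty, then min over this feasible set of aᵀx + c equals sup over β ≥ 0 of D(β) := (a + βg)ᵀx̂ − Σⱼ |(a + βg)ⱼ| εⱼ + c + βh. -/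
open Finset

/-- sign function with `sg 0 = 1`; satisfies `sg r * r = |r|`. -/
noncomputable def sg (r : ℝ) : ℝ := if 0 ≤ r then 1 else -1

lemma sg_mul_self (r : ℝ) : sg r * r = |r| := by
  unfold sg
  split
  · rw [abs_of_nonneg ‹_›]; ring
  · rw [abs_of_neg (lt_of_not_ge ‹_›)]; ring

lemma abs_sg_le (r : ℝ) : |sg r| ≤ 1 := by
  unfold sg; split <;> simp

/-- basic box inequality: q*x̂ - |q|ε ≤ q*x when |x - x̂| ≤ ε. -/
lemma term_ineq (q e x xh : ℝ) (hx : |x - xh| ≤ e) : q * xh - |q| * e ≤ q * x := by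
  have h1 : |q| * |x - xh| ≤ |q| * e := mul_le_mul_of_nonneg_left hx (abs_nonneg q)
  have h2 : -(|q| * |x - xh|) ≤ q * (x - xh) := by
    rw [← abs_mul]; exact neg_abs_le _
  nlinarith

/-- term identity for the forward perturbation. -/
lemma term_shift (q gg xh e δ : ℝ) (hδ : 0 < δ) (hle : q ≠ 0 → gg ≠ 0 → δ * |gg| ≤ |q|) :
    (q + δ * gg) * xh - |q + δ * gg| * e
      = q * xh - |q| * e + δ * (gg * (xh - (if q = 0 then sg gg else sg q) * e)) := by
  by_cases hq : q = 0
  · subst hq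
    rw [if_pos rfl]
    simp only [zero_add, abs_zero]
    rw [abs_mul, abs_of_pos hδ]
    linear_combination (δ * e) * sg_mul_self gg
  · rw [if_neg hq]
    by_cases hg : gg = 0
    · simp [hg]
    · have hle' := hle hq hg
      rcases lt_or_gt_of_ne hq with hq' | hq'
      · -- q < 0
        have haq : |q| = -q := abs_of_neg hq'
        have hsg : sg q = -1 := by unfold sg; rw [if_neg (not_le.mpr hq')]
        have h1 : δ * gg ≤ δ * |gg| := mul_le_mul_of_nonneg_left (le_abs_self gg) hδ.le
        have h2 : |q + δ * gg| = -(q + δ * gg) := abs_of_nonpos (by linarith [haq ▸ hle'])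
        rw [h2, haq, hsg]; ring
      · -- q > 0
        have haq : |q| = q := abs_of_pos hq'
        have hsg : sg q = 1 := by unfold sg; rw [if_pos hq'.le]
        have h1 : -(δ * |gg|) ≤ δ * gg := by nlinarith [neg_abs_le gg]
        have h2 : |q + δ * gg| = q + δ * gg := abs_of_nonneg (by linarith [haq ▸ hle'])
        rw [h2, haq, hsg]; ring

/-- term identity for the backward perturbation. -/
lemma term_shift' (q gg xh e δ : ℝ) (hδ : 0 < δ) (hle : q ≠ 0 → gg ≠ 0 → δ * |gg| ≤ |q|) :
    (q - δ * gg) * xh - |q - δ * gg| * e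
      = q * xh - |q| * e - δ * (gg * (if q = 0 then xh + sg gg * e else xh - sg q * e)) := by
  by_cases hq : q = 0
  · subst hq
    rw [if_pos rfl]
    simp only [zero_sub, abs_neg, zero_mul, abs_zero]
    rw [abs_mul, abs_of_pos hδ]
    linear_combination (δ * e) * sg_mul_self gg
  · rw [if_neg hq]
    by_cases hg : gg = 0
    · simp [hg]
    · have hle' := hle hq hg
      rcases lt_or_gt_of_ne hq with hq' | hq'
      · have haq : |q| = -q := abs_of_neg hq'
        have hsg : sg q = -1 := by unfold sg; rw [if_neg (not_le.mpr hq')]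
        have h1 : -(δ * |gg|) ≤ δ * gg := by nlinarith [neg_abs_le gg]
        have h2 : |q - δ * gg| = -(q - δ * gg) := abs_of_nonpos (by linarith [haq ▸ hle'])
        rw [h2, haq, hsg]; ring
      · have haq : |q| = q := abs_of_pos hq'
        have hsg : sg q = 1 := by unfold sg; rw [if_pos hq'.le]
        have h1 : δ * gg ≤ δ * |gg| := mul_le_mul_of_nonneg_left (le_abs_self gg) hδ.le
        have h2 : |q - δ * gg| = q - δ * gg := abs_of_nonneg (by linarith [haq ▸ hle'])
        rw [h2, haq, hsg]; ring

/-- Strong duality for box-constrained linear minimization with one linear constraint. -/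
theorem strong_duality_single_constraint
    (n : ℕ) (a g xhat ε : Fin n → ℝ) (c h : ℝ)
    (hε : ∀ j, 0 ≤ ε j)
    (hfeas : ∃ x : Fin n → ℝ, (∀ j, |x j - xhat j| ≤ ε j) ∧ ∑ j, g j * x j + h ≤ 0) :
    sInf {v : ℝ | ∃ x : Fin n → ℝ, (∀ j, |x j - xhat j| ≤ ε j) ∧
        ∑ j, g j * x j + h ≤ 0 ∧ v = ∑ j, a j * x j + c}
      = sSup {v : ℝ | ∃ β : ℝ, 0 ≤ β ∧
        v = ∑ j, (a j + β * g j) * xhat j - ∑ j, |a j + β * g j| * ε j + c + β * h} := by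
  obtain ⟨x₀, hx₀box, hx₀g⟩ := hfeas
  set D : ℝ → ℝ := fun β => ∑ j, (a j + β * g j) * xhat j
      - ∑ j, |a j + β * g j| * ε j + c + β * h with hDdef
  -- weak duality
  have weak : ∀ β : ℝ, 0 ≤ β → ∀ x : Fin n → ℝ, (∀ j, |x j - xhat j| ≤ ε j) →
      ∑ j, g j * x j + h ≤ 0 → D β ≤ ∑ j, a j * x j + c := by
    intro β hβ x hx hgx
    have h1 : ∑ j, ((a j + β * g j) * xhat j - |a j + β * g j| * ε j)
        ≤ ∑ j, (a j + β * g j) * x j :=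
      Finset.sum_le_sum fun j _ => term_ineq _ _ _ _ (hx j)
    have h2 : ∑ j, (a j + β * g j) * x j = ∑ j, a j * x j + β * ∑ j, g j * x j := by
      rw [Finset.mul_sum, ← Finset.sum_add_distrib]
      exact Finset.sum_congr rfl fun j _ => by ring
    have h3 : β * (∑ j, g j * x j + h) ≤ 0 := mul_nonpos_of_nonneg_of_nonpos hβ hgx
    rw [mul_add] at h3
    have h4 : ∑ j, ((a j + β * g j) * xhat j - |a j + β * g j| * ε j)
        = ∑ j, (a j + β * g j) * xhat j - ∑ j, |a j + β * g j| * ε j :=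
      Finset.sum_sub_distrib _ _
    simp only [hDdef]
    linarith
  -- the bound beyond which D is affine with nonpositive slope
  set B : ℝ := ∑ j, |a j| / |g j| with hBdef
  have hB0 : 0 ≤ B :=
    Finset.sum_nonneg fun j _ => div_nonneg (abs_nonneg _) (abs_nonneg _)
  have hBj : ∀ j, g j ≠ 0 → |a j| ≤ B * |g j| := by
    intro j hg
    have h1 : |a j| / |g j| ≤ B :=
      Finset.single_le_sum (f := fun i => |a i| / |g i|)
        (fun i _ => div_nonneg (abs_nonneg _) (abs_nonneg _)) (Finset.mem_univ j)
    have h2 : 0 < |g j| := abs_pos.mpr hg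
    calc |a j| = (|a j| / |g j|) * |g j| := by field_simp
    _ ≤ B * |g j| := mul_le_mul_of_nonneg_right h1 h2.le
  have slope_le : ∑ j, (g j * xhat j - |g j| * ε j) + h ≤ 0 := by
    have h1 : ∑ j, (g j * xhat j - |g j| * ε j) ≤ ∑ j, g j * x₀ j :=
      Finset.sum_le_sum fun j _ => term_ineq _ _ _ _ (hx₀box j)
    linarith
  have htail : ∀ β : ℝ, B ≤ β → D β ≤ D B := by
    intro β hβ
    have key : ∀ j ∈ Finset.univ, (a j + β * g j) * xhat j - |a j + β * g j| * ε j
        = ((a j + B * g j) * xhat j - |a j + B * g j| * ε j)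
          + (β - B) * (g j * xhat j - |g j| * ε j) := by
      intro j _
      rcases lt_trichotomy (g j) 0 with hg | hg | hg
      · have h1 : |a j| ≤ B * |g j| := hBj j hg.ne
        rw [abs_of_neg hg] at h1
        have h2 : a j + B * g j ≤ 0 := by nlinarith [le_abs_self (a j)]
        have h3 : a j + β * g j ≤ 0 := by
          nlinarith [mul_nonneg (sub_nonneg.mpr hβ) (neg_nonneg.mpr hg.le)]
        rw [abs_of_nonpos h2, abs_of_nonpos h3, abs_of_neg hg]; ring
      · simp [hg]
      · have h1 : |a j| ≤ B * |g j| := hBj j hg.ne'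
        rw [abs_of_pos hg] at h1
        have h2 : 0 ≤ a j + B * g j := by nlinarith [neg_abs_le (a j)]
        have h3 : 0 ≤ a j + β * g j := by
          nlinarith [mul_nonneg (sub_nonneg.mpr hβ) hg.le]
        rw [abs_of_nonneg h2, abs_of_nonneg h3, abs_of_pos hg]; ring
    have e1 : ∑ j, (a j + β * g j) * xhat j - ∑ j, |a j + β * g j| * ε j
        = (∑ j, (a j + B * g j) * xhat j - ∑ j, |a j + B * g j| * ε j)
          + (β - B) * ∑ j, (g j * xhat j - |g j| * ε j) := by
      rw [← Finset.sum_sub_distrib, ← Finset.sum_sub_distrib, Finset.mul_sum,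
        ← Finset.sum_add_distrib]
      exact Finset.sum_congr rfl key
    have e2 : (β - B) * (∑ j, (g j * xhat j - |g j| * ε j) + h) ≤ 0 :=
      mul_nonpos_of_nonneg_of_nonpos (by linarith) slope_le
    rw [mul_add] at e2
    have e3 : (β - B) * h = β * h - B * h := by ring
    simp only [hDdef]
    linarith [e1, e2, e3]
  -- continuity of D and existence of a global maximizer on [0, ∞)
  have hcont : Continuous D := by
    rw [hDdef]
    apply Continuous.add
    apply Continuous.add
    apply Continuous.sub
    · exact continuous_finset_sum _ fun j _ =>
        (continuous_const.add (continuous_id.mul continuous_const)).mul continuous_const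
    · exact continuous_finset_sum _ fun j _ =>
        (continuous_const.add (continuous_id.mul continuous_const)).abs.mul continuous_const
    · exact continuous_const
    · exact continuous_id.mul continuous_const
  obtain ⟨βs, hβsmem, hβsmax⟩ :=
    isCompact_Icc.exists_isMaxOn (Set.nonempty_Icc.mpr hB0) hcont.continuousOn
  have hβs0 : 0 ≤ βs := hβsmem.1
  have hglobal : ∀ β : ℝ, 0 ≤ β → D β ≤ D βs := by
    intro β hβ
    rcases le_or_gt β B with hle | hlt
    · exact isMaxOn_iff.mp hβsmax β ⟨hβ, hle⟩
    · exact le_trans (htail β hlt.le) (isMaxOn_iff.mp hβsmax B ⟨hB0, le_refl B⟩)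
  -- the reduced cost vector and candidate minimizers
  set q : Fin n → ℝ := fun j => a j + βs * g j with hq
  set u : Fin n → ℝ := fun j =>
    if q j = 0 then xhat j - sg (g j) * ε j else xhat j - sg (q j) * ε j with hu
  set w : Fin n → ℝ := fun j =>
    if q j = 0 then xhat j + sg (g j) * ε j else xhat j - sg (q j) * ε j with hw
  have hubox : ∀ j, |u j - xhat j| ≤ ε j := by
    intro j
    have e : u j - xhat j = -((if q j = 0 then sg (g j) else sg (q j)) * ε j) := by
      simp only [hu]; split <;> ring
    rw [e, abs_neg, abs_mul, abs_of_nonneg (hε j)]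
    have h1 : |if q j = 0 then sg (g j) else sg (q j)| ≤ 1 := by split <;> exact abs_sg_le _
    nlinarith [hε j]
  have hwbox : ∀ j, |w j - xhat j| ≤ ε j := by
    intro j
    have e : w j - xhat j = (if q j = 0 then sg (g j) else -sg (q j)) * ε j := by
      simp only [hw]; split <;> ring
    rw [e, abs_mul, abs_of_nonneg (hε j)]
    have h1 : |if q j = 0 then sg (g j) else -sg (q j)| ≤ 1 := by
      split
      · exact abs_sg_le _
      · rw [abs_neg]; exact abs_sg_le _
    nlinarith [hε j]
  have hqu : ∀ j, q j * u j = q j * xhat j - |q j| * ε j := by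
    intro j
    simp only [hu]
    split
    · rename_i hqj; rw [hqj]; simp
    · rw [← sg_mul_self (q j)]; ring
  have hqwu : ∀ j, q j * (w j - u j) = 0 := by
    intro j
    simp only [hu, hw]
    split
    · rename_i hqj; rw [hqj]; ring
    · ring
  -- a uniformly small positive step size
  set f : Fin n → ℝ := fun j => if q j = 0 ∨ g j = 0 then 1 else |q j| / |g j| with hf
  set T : Finset ℝ := insert 1 (Finset.image f Finset.univ) with hT
  have hTne : T.Nonempty := ⟨1, Finset.mem_insert_self 1 _⟩
  set δ₀ : ℝ := T.min' hTne with hδ₀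
  have hδ₀pos : 0 < δ₀ := by
    have hall : ∀ r ∈ T, 0 < r := by
      intro r hr
      rw [hT] at hr
      rcases Finset.mem_insert.mp hr with h1 | h2
      · rw [h1]; norm_num
      · obtain ⟨j, _, hj⟩ := Finset.mem_image.mp h2
        rw [← hj]
        simp only [hf]
        split
        · norm_num
        · rename_i hcond
          push_neg at hcond
          exact div_pos (abs_pos.mpr hcond.1) (abs_pos.mpr hcond.2)
    exact hall _ (T.min'_mem hTne)
  have hδ₀le : ∀ j, q j ≠ 0 → g j ≠ 0 → δ₀ * |g j| ≤ |q j| := by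
    intro j hqj hgj
    have h1 : f j ∈ T := by
      rw [hT]; exact Finset.mem_insert_of_mem (Finset.mem_image_of_mem f (Finset.mem_univ j))
    have h2 : δ₀ ≤ f j := T.min'_le _ h1
    rw [hf] at h2
    simp only at h2
    rw [if_neg (by simp [hqj, hgj])] at h2
    have h3 : 0 < |g j| := abs_pos.mpr hgj
    calc δ₀ * |g j| ≤ (|q j| / |g j|) * |g j| := mul_le_mul_of_nonneg_right h2 h3.le
    _ = |q j| := by field_simp
  -- Fmin ≤ 0
  set Fmin : ℝ := ∑ j, g j * u j + h with hFm
  set Fmax : ℝ := ∑ j, g j * w j + h with hFM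
  have hFminle : Fmin ≤ 0 := by
    have key : ∀ j ∈ Finset.univ,
        (a j + (βs + δ₀) * g j) * xhat j - |a j + (βs + δ₀) * g j| * ε j
          = (q j * xhat j - |q j| * ε j) + δ₀ * (g j * u j) := by
      intro j _
      have e0 : a j + (βs + δ₀) * g j = q j + δ₀ * g j := by simp only [hq]; ring
      rw [e0, term_shift (q j) (g j) (xhat j) (ε j) δ₀ hδ₀pos (hδ₀le j)]
      simp only [hu]
      by_cases hqj : q j = 0
      · simp only [if_pos hqj]
      · simp only [if_neg hqj]
    have hsum1 : ∑ j, (a j + (βs + δ₀) * g j) * xhat j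
          - ∑ j, |a j + (βs + δ₀) * g j| * ε j
        = (∑ j, q j * xhat j - ∑ j, |q j| * ε j) + δ₀ * ∑ j, g j * u j := by
      rw [← Finset.sum_sub_distrib, ← Finset.sum_sub_distrib, Finset.mul_sum,
        ← Finset.sum_add_distrib]
      exact Finset.sum_congr rfl key
    have hsum2 : ∑ j, (a j + βs * g j) * xhat j - ∑ j, |a j + βs * g j| * ε j
        = ∑ j, q j * xhat j - ∑ j, |q j| * ε j := by simp only [hq]
    have h5 : D (βs + δ₀) ≤ D βs := hglobal (βs + δ₀) (by linarith)
    have hDex : D (βs + δ₀) = D βs + δ₀ * Fmin := by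
      simp only [hDdef, hFm]
      rw [hsum1, hsum2]
      ring
    rw [hDex] at h5
    have h6 : δ₀ * Fmin ≤ 0 := by linarith
    nlinarith [h6, hδ₀pos]
  -- a primal point achieving the dual value D βs
  have hstar : ∃ x : Fin n → ℝ, (∀ j, |x j - xhat j| ≤ ε j) ∧
      (∑ j, g j * x j + h ≤ 0) ∧ (∑ j, a j * x j + c = D βs) := by
    rcases eq_or_lt_of_le hβs0 with hβ0 | hβpos
    · -- βs = 0 : take x = u
      refine ⟨u, hubox, ?_, ?_⟩
      · rw [← hFm]; exact hFminle
      · have hq0 : ∀ j, q j = a j := by intro j; simp only [hq, ← hβ0]; ring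
        have e : ∑ j, a j * u j = ∑ j, (a j * xhat j - |a j| * ε j) := by
          refine Finset.sum_congr rfl fun j _ => ?_
          have h1 := hqu j
          rw [hq0 j] at h1
          exact h1
        simp only [hDdef, ← hβ0, zero_mul, add_zero]
        rw [e, Finset.sum_sub_distrib]
    · -- βs > 0 : first show Fmax ≥ 0
      have hFmaxge : 0 ≤ Fmax := by
        set δ' : ℝ := min δ₀ βs with hδ'
        have hδ'pos : 0 < δ' := lt_min hδ₀pos hβpos
        have hδ'le : ∀ j, q j ≠ 0 → g j ≠ 0 → δ' * |g j| ≤ |q j| := by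
          intro j h1 h2
          calc δ' * |g j| ≤ δ₀ * |g j| :=
            mul_le_mul_of_nonneg_right (min_le_left _ _) (abs_nonneg _)
          _ ≤ |q j| := hδ₀le j h1 h2
        have key : ∀ j ∈ Finset.univ,
            (a j + (βs - δ') * g j) * xhat j - |a j + (βs - δ') * g j| * ε j
              = (q j * xhat j - |q j| * ε j) - δ' * (g j * w j) := by
          intro j _
          have e0 : a j + (βs - δ') * g j = q j - δ' * g j := by simp only [hq]; ring
          rw [e0, term_shift' (q j) (g j) (xhat j) (ε j) δ' hδ'pos (hδ'le j)]
        have hsum1 : ∑ j, (a j + (βs - δ') * g j) * xhat j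
              - ∑ j, |a j + (βs - δ') * g j| * ε j
            = (∑ j, q j * xhat j - ∑ j, |q j| * ε j) - δ' * ∑ j, g j * w j := by
          rw [← Finset.sum_sub_distrib, Finset.mul_sum, ← Finset.sum_sub_distrib,
            ← Finset.sum_sub_distrib]
          exact Finset.sum_congr rfl key
        have hsum2 : ∑ j, (a j + βs * g j) * xhat j - ∑ j, |a j + βs * g j| * ε j
            = ∑ j, q j * xhat j - ∑ j, |q j| * ε j := by simp only [hq]
        have hβd : 0 ≤ βs - δ' := by
          have := min_le_right δ₀ βs
          simp only [hδ']; linarith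
        have h5 : D (βs - δ') ≤ D βs := hglobal (βs - δ') hβd
        have hDex : D (βs - δ') = D βs - δ' * Fmax := by
          simp only [hDdef, hFM]
          rw [hsum1, hsum2]
          ring
        rw [hDex] at h5
        nlinarith [hδ'pos]
      -- convex combination parameter
      set t : ℝ := -Fmin / (Fmax - Fmin) with ht
      have htd : 0 ≤ Fmax - Fmin := by linarith
      have ht0 : 0 ≤ t := by
        rcases eq_or_lt_of_le htd with hd0 | hdpos
        · rw [ht, show Fmax - Fmin = 0 from hd0.symm, div_zero]
        · exact div_nonneg (by linarith) htd
      have ht1 : t ≤ 1 := by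
        rcases eq_or_lt_of_le htd with hd0 | hdpos
        · rw [ht, show Fmax - Fmin = 0 from hd0.symm, div_zero]; norm_num
        · rw [ht, div_le_one hdpos]; linarith
      have htF : Fmin + t * (Fmax - Fmin) = 0 := by
        rcases eq_or_lt_of_le htd with hd0 | hdpos
        · have h1 : Fmax - Fmin = 0 := hd0.symm
          have h2 : Fmin = 0 := by linarith
          rw [h1, h2]; ring
        · have hne : Fmax - Fmin ≠ 0 := ne_of_gt hdpos
          rw [ht]; field_simp; ring
      -- the constraint holds with equality at the combination
      have hgsum : ∑ j, g j * (u j + t * (w j - u j)) + h = 0 := by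
        have hgx : ∑ j, g j * (u j + t * (w j - u j))
            = ∑ j, g j * u j + t * (∑ j, g j * w j - ∑ j, g j * u j) := by
          rw [← Finset.sum_sub_distrib, Finset.mul_sum, ← Finset.sum_add_distrib]
          exact Finset.sum_congr rfl fun j _ => by ring
        have e1 : ∑ j, g j * u j = Fmin - h := by rw [hFm]; ring
        have e2 : ∑ j, g j * w j = Fmax - h := by rw [hFM]; ring
        have e3 : t * ((Fmax - h) - (Fmin - h)) = t * (Fmax - Fmin) := by ring
        rw [hgx, e1, e2]
        linarith [htF, e3]
      refine ⟨fun j => u j + t * (w j - u j), ?_, by linarith [hgsum], ?_⟩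
      · intro j
        have e : (u j + t * (w j - u j)) - xhat j
            = (1 - t) * (u j - xhat j) + t * (w j - xhat j) := by ring
        rw [e]
        have h1 := abs_add_le ((1 - t) * (u j - xhat j)) (t * (w j - xhat j))
        rw [abs_mul, abs_mul, abs_of_nonneg (by linarith : (0:ℝ) ≤ 1 - t),
          abs_of_nonneg ht0] at h1
        have h2 : (1 - t) * |u j - xhat j| ≤ (1 - t) * ε j :=
          mul_le_mul_of_nonneg_left (hubox j) (by linarith)
        have h3 : t * |w j - xhat j| ≤ t * ε j := mul_le_mul_of_nonneg_left (hwbox j) ht0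
        linarith
      · -- the value equals D βs
        have e1 : ∑ j, a j * (u j + t * (w j - u j))
            = ∑ j, q j * (u j + t * (w j - u j))
              - βs * ∑ j, g j * (u j + t * (w j - u j)) := by
          rw [Finset.mul_sum, ← Finset.sum_sub_distrib]
          refine Finset.sum_congr rfl fun j _ => ?_
          simp only [hq]; ring
        have e2 : ∑ j, q j * (u j + t * (w j - u j))
            = ∑ j, (q j * xhat j - |q j| * ε j) := by
          refine Finset.sum_congr rfl fun j _ => ?_
          linear_combination hqu j + t * hqwu j
        have e3 : ∑ j, g j * (u j + t * (w j - u j)) = -h := by linarith [hgsum]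
        rw [e1, e2, e3, Finset.sum_sub_distrib]
        simp only [hDdef, hq]
        ring
  -- final assembly
  obtain ⟨xs, hxsbox, hxscon, hxsval⟩ := hstar
  have hmemP : (∑ j, a j * xs j + c) ∈ {v : ℝ | ∃ x : Fin n → ℝ,
      (∀ j, |x j - xhat j| ≤ ε j) ∧ ∑ j, g j * x j + h ≤ 0 ∧ v = ∑ j, a j * x j + c} :=
    ⟨xs, hxsbox, hxscon, rfl⟩
  have hmemQ : D βs ∈ {v : ℝ | ∃ β : ℝ, 0 ≤ β ∧
      v = ∑ j, (a j + β * g j) * xhat j - ∑ j, |a j + β * g j| * ε j + c + β * h} :=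
    ⟨βs, hβs0, by simp only [hDdef]⟩
  have hQub : ∀ v ∈ {v : ℝ | ∃ β : ℝ, 0 ≤ β ∧
      v = ∑ j, (a j + β * g j) * xhat j - ∑ j, |a j + β * g j| * ε j + c + β * h},
      v ≤ ∑ j, a j * xs j + c := by
    rintro v ⟨β, hβ, rfl⟩
    have h1 := weak β hβ xs hxsbox hxscon
    simpa only [hDdef] using h1
  have hPlb : ∀ v ∈ {v : ℝ | ∃ x : Fin n → ℝ,
      (∀ j, |x j - xhat j| ≤ ε j) ∧ ∑ j, g j * x j + h ≤ 0 ∧ v = ∑ j, a j * x j + c},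
      D βs ≤ v := by
    rintro v ⟨x, hx1, hx2, rfl⟩
    exact weak βs hβs0 x hx1 hx2
  apply le_antisymm
  · calc sInf _ ≤ ∑ j, a j * xs j + c := csInf_le ⟨D βs, hPlb⟩ hmemP
    _ = D βs := hxsval
    _ ≤ sSup _ := le_csSup ⟨∑ j, a j * xs j + c, hQub⟩ hmemQ
  · refine csSup_le ⟨D βs, hmemQ⟩ ?_
    rintro v ⟨β, hβ, rfl⟩
    refine le_csInf ⟨∑ j, a j * xs j + c, hmemP⟩ ?_
    rintro p ⟨x, hx1, hx2, rfl⟩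
    have h1 := weak β hβ x hx1 hx2
    simpa only [hDdef] using h1
end

section
/- If the feasible set 𝒳 ∩ {x : gᵀx + h ≤ 0} is nonempty for the box 𝒳 = {x : |xⱼ − x̂ⱼ| ≤ εⱼ}, then the dual objective D(β) = (a + βg)ᵀx̂ − Σⱼ |(a + βg)ⱼ| εⱼ + c + βh tends to −∞ as β → +∞ unless gᵀx̂ + h − Σⱼ|gⱼ|εⱼ = 0, and in all feasible cases sup_{β ≥ 0} D(β) is attained (the supremum is a maximum). -/
open Finset Filter

/-- If the feasible set is nonempty, then D(β) → −∞ as β → ∞ unless the concretized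
minimum of the constraint is exactly 0, and in all feasible cases the supremum of the
dual objective over β ≥ 0 is attained. -/
theorem dual_objective_sup_attained
    (n : ℕ) (a g xhat ε : Fin n → ℝ) (c h : ℝ)
    (hε : ∀ j, 0 ≤ ε j)
    (hfeas : ∃ x : Fin n → ℝ, (∀ j, |x j - xhat j| ≤ ε j) ∧ ∑ j, g j * x j + h ≤ 0) :
    ((∑ j, g j * xhat j + h - ∑ j, |g j| * ε j) ≠ 0 →
      Tendsto (fun β : ℝ =>
          ∑ j, (a j + β * g j) * xhat j - ∑ j, |a j + β * g j| * ε j + c + β * h)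
        atTop atBot) ∧
    (∃ βstar : ℝ, 0 ≤ βstar ∧ ∀ β : ℝ, 0 ≤ β →
      (∑ j, (a j + β * g j) * xhat j - ∑ j, |a j + β * g j| * ε j + c + β * h)
        ≤ (∑ j, (a j + βstar * g j) * xhat j - ∑ j, |a j + βstar * g j| * ε j + c
            + βstar * h)) := by
  set D : ℝ → ℝ := fun β =>
    ∑ j, (a j + β * g j) * xhat j - ∑ j, |a j + β * g j| * ε j + c + β * h with hD
  set S : ℝ := ∑ j, g j * xhat j + h - ∑ j, |g j| * ε j with hS
  -- feasibility gives S ≤ 0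
  obtain ⟨x, hx, hgx⟩ := hfeas
  have hSle : S ≤ 0 := by
    have key : ∀ j, g j * xhat j - |g j| * ε j ≤ g j * x j := by
      intro j
      have h1 : g j * (xhat j - x j) ≤ |g j| * ε j := by
        calc g j * (xhat j - x j) ≤ |g j * (xhat j - x j)| := le_abs_self _
          _ = |g j| * |xhat j - x j| := abs_mul _ _
          _ = |g j| * |x j - xhat j| := by rw [abs_sub_comm]
          _ ≤ |g j| * ε j := by
              exact mul_le_mul_of_nonneg_left (hx j) (abs_nonneg _)
      nlinarith
    have : ∑ j, (g j * xhat j - |g j| * ε j) ≤ ∑ j, g j * x j :=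
      Finset.sum_le_sum fun j _ => key j
    rw [Finset.sum_sub_distrib] at this
    simp only [hS]; linarith
  have hCont : Continuous D := by
    apply Continuous.add
    apply Continuous.add
    apply Continuous.sub
    · exact continuous_finset_sum _ fun j _ => by fun_prop
    · exact continuous_finset_sum _ fun j _ => by
        exact ((continuous_const.add (continuous_id.mul continuous_const)).abs).mul
          continuous_const
    · exact continuous_const
    · exact continuous_id.mul continuous_const
  -- pointwise upper bound for β ≥ 0
  have hub : ∀ β : ℝ, 0 ≤ β →
      D β ≤ (∑ j, a j * xhat j + ∑ j, |a j| * ε j + c) + β * S := by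
    intro β hβ
    have h1 : ∑ j, (a j + β * g j) * xhat j
        = ∑ j, a j * xhat j + β * ∑ j, g j * xhat j := by
      rw [Finset.mul_sum, ← Finset.sum_add_distrib]
      exact Finset.sum_congr rfl fun j _ => by ring
    have h2 : ∑ j, (β * |g j| - |a j|) * ε j ≤ ∑ j, |a j + β * g j| * ε j := by
      refine Finset.sum_le_sum fun j _ => mul_le_mul_of_nonneg_right ?_ (hε j)
      have := abs_sub_abs_le_abs_sub (β * g j) (-(a j))
      have hb : |β * g j| = β * |g j| := by
        rw [abs_mul, abs_of_nonneg hβ]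
      rw [abs_neg, sub_neg_eq_add] at this
      rw [hb] at this
      have : β * |g j| - |a j| ≤ |β * g j + a j| := this
      rwa [add_comm] at this
    have h3 : ∑ j, (β * |g j| - |a j|) * ε j
        = β * ∑ j, |g j| * ε j - ∑ j, |a j| * ε j := by
      rw [Finset.mul_sum, ← Finset.sum_sub_distrib]
      exact Finset.sum_congr rfl fun j _ => by ring
    simp only [hD, hS]
    rw [h1]
    nlinarith [h2, h3]
  constructor
  · intro hSne
    have hSneg : S < 0 := lt_of_le_of_ne hSle hSne
    have hlim : Tendsto (fun β : ℝ =>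
        (∑ j, a j * xhat j + ∑ j, |a j| * ε j + c) + β * S) atTop atBot := by
      apply Filter.tendsto_atBot_add_const_left
      exact tendsto_id.atTop_mul_const_of_neg hSneg
    refine tendsto_atBot_mono' atTop ?_ hlim
    filter_upwards [eventually_ge_atTop (0 : ℝ)] with β hβ
    exact hub β hβ
  · -- attainment
    set B : ℝ := ∑ j, |a j| / |g j| with hB
    have hB0 : 0 ≤ B :=
      Finset.sum_nonneg fun j _ => div_nonneg (abs_nonneg _) (abs_nonneg _)
    have hBg : ∀ j, |a j| ≤ B * |g j| ∨ g j = 0 := by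
      intro j
      by_cases hg : g j = 0
      · exact Or.inr hg
      · left
        have hgpos : 0 < |g j| := abs_pos.mpr hg
        have hle : |a j| / |g j| ≤ B :=
          Finset.single_le_sum (f := fun j => |a j| / |g j|)
            (fun i _ => div_nonneg (abs_nonneg _) (abs_nonneg _)) (Finset.mem_univ j)
        calc |a j| = |a j| / |g j| * |g j| := by field_simp
          _ ≤ B * |g j| := mul_le_mul_of_nonneg_right hle hgpos.le
    -- for β ≥ B : D β = D B + (β - B) * S ≤ D B
    have habs : ∀ β : ℝ, B ≤ β → ∀ j, |a j + β * g j| = |a j + B * g j| + (β - B) * |g j| := by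
      intro β hβ j
      rcases hBg j with hj | hj
      · rcases lt_trichotomy (g j) 0 with hg | hg | hg
        · have hgabs : |g j| = -(g j) := abs_of_neg hg
          have h1 : a j + B * g j ≤ 0 := by
            have h0 : B * (-(g j)) ≥ |a j| := by rw [← hgabs]; linarith [hj]
            nlinarith [le_abs_self (a j)]
          have h2 : a j + β * g j ≤ 0 := by nlinarith
          rw [abs_of_nonpos h1, abs_of_nonpos h2, hgabs]; ring
        · simp [hg]
        · have hgabs : |g j| = g j := abs_of_pos hg
          have h1 : 0 ≤ a j + B * g j := by
            rw [hgabs] at hj; nlinarith [neg_abs_le (a j)]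
          have h2 : 0 ≤ a j + β * g j := by nlinarith
          rw [abs_of_nonneg h1, abs_of_nonneg h2, hgabs]; ring
      · simp [hj]
    have htail : ∀ β : ℝ, B ≤ β → D β ≤ D B := by
      intro β hβ
      have hdec : D β = D B + (β - B) * S := by
        simp only [hD, hS]
        have e1 : ∑ j, (a j + β * g j) * xhat j
            = ∑ j, (a j + B * g j) * xhat j + (β - B) * ∑ j, g j * xhat j := by
          rw [Finset.mul_sum, ← Finset.sum_add_distrib]
          exact Finset.sum_congr rfl fun j _ => by ring
        have e2 : ∑ j, |a j + β * g j| * ε j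
            = ∑ j, |a j + B * g j| * ε j + (β - B) * ∑ j, |g j| * ε j := by
          rw [Finset.mul_sum, ← Finset.sum_add_distrib]
          refine Finset.sum_congr rfl fun j _ => ?_
          rw [habs β hβ j]; ring
        rw [e1, e2]; ring
      rw [hdec]
      nlinarith [hSle, hβ]
    obtain ⟨βstar, hmem, hmax⟩ :=
      (isCompact_Icc (a := (0:ℝ)) (b := B)).exists_isMaxOn
        (Set.nonempty_Icc.mpr hB0) hCont.continuousOn
    refine ⟨βstar, hmem.1, fun β hβ => ?_⟩
    by_cases hβB : β ≤ B
    · exact hmax ⟨hβ, hβB⟩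
    · exact le_trans (htail β (le_of_not_ge hβB)) (hmax ⟨hB0, le_refl B⟩)
end

section
/- Componentwise tightness of relaxed clipping: with 𝒳 = {x : x̂ − ε ≤ x ≤ x̂ + ε}, ε > 0 componentwise, constraint aᵀx + c ≤ 0 feasible over 𝒳, and aᵢ > 0, the clipped upper bound min{x̂ᵢ + εᵢ, (−Σ_{j≠i}(aⱼx̂ⱼ − |aⱼ|εⱼ) − c)/aᵢ} is attained: there exists a feasible point x ∈ 𝒳 with aᵀx + c ≤ 0 whose i-th coordinate equals this value. -/
open Finset

/-- Componentwise tightness of relaxed clipping: the clipped upper bound in coordinate i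
is attained by a feasible point. -/
theorem relaxed_clipping_tight
    (n : ℕ) (a xhat ε : Fin n → ℝ) (c : ℝ)
    (hε : ∀ j, 0 < ε j)
    (hfeas : ∃ x : Fin n → ℝ, (∀ j, xhat j - ε j ≤ x j ∧ x j ≤ xhat j + ε j) ∧
      ∑ j, a j * x j + c ≤ 0)
    (i : Fin n) (hai : 0 < a i) :
    ∃ x : Fin n → ℝ, (∀ j, xhat j - ε j ≤ x j ∧ x j ≤ xhat j + ε j) ∧
      ∑ j, a j * x j + c ≤ 0 ∧
      x i = min (xhat i + ε i)
        ((-(∑ j ∈ Finset.univ.erase i, (a j * xhat j - |a j| * ε j)) - c) / a i) := by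
  obtain ⟨x0, hx0b, hx0f⟩ := hfeas
  set S := ∑ j ∈ Finset.univ.erase i, (a j * xhat j - |a j| * ε j) with hS
  have key : ∀ j, a j * xhat j - |a j| * ε j ≤ a j * x0 j := by
    intro j
    rcases le_or_gt 0 (a j) with h | h
    · rw [abs_of_nonneg h]
      nlinarith [(hx0b j).1, mul_le_mul_of_nonneg_left (hx0b j).1 h]
    · rw [abs_of_neg h]
      nlinarith [(hx0b j).2]
  have hSbound : S + a i * (xhat i - ε i) + c ≤ 0 := by
    have h1 : S ≤ ∑ j ∈ Finset.univ.erase i, a j * x0 j :=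
      Finset.sum_le_sum (fun j _ => key j)
    have h2 : a i * (xhat i - ε i) ≤ a i * x0 i := by
      have := key i; rw [abs_of_pos hai] at this; nlinarith
    have h3 : ∑ j ∈ Finset.univ.erase i, a j * x0 j + a i * x0 i = ∑ j, a j * x0 j :=
      Finset.sum_erase_add _ _ (Finset.mem_univ i)
    linarith
  have hlow : xhat i - ε i ≤ (-S - c) / a i := by
    rw [le_div_iff₀ hai]; nlinarith
  set t := min (xhat i + ε i) ((-S - c) / a i) with ht
  refine ⟨fun j => if j = i then t else xhat j - (if 0 ≤ a j then ε j else -ε j), ?_, ?_, ?_⟩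
  · intro j
    by_cases hj : j = i
    · subst hj
      simp only [if_pos rfl]
      constructor
      · exact le_min (by linarith [hε j]) hlow
      · exact min_le_left _ _
    · simp only [if_neg hj]
      rcases le_or_gt 0 (a j) with h | h
      · simp only [if_pos h]
        constructor <;> linarith [hε j]
      · simp only [if_neg (not_le.mpr h)]
        constructor <;> linarith [hε j]
  · have hsum : ∑ j, a j * (if j = i then t else xhat j - (if 0 ≤ a j then ε j else -ε j))
        = a i * t + S := by
      rw [← Finset.sum_erase_add _ _ (Finset.mem_univ i), if_pos rfl, add_comm]
      congr 1
      apply Finset.sum_congr rfl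
      intro j hj
      rw [if_neg (Finset.ne_of_mem_erase hj)]
      rcases le_or_gt 0 (a j) with h | h
      · rw [if_pos h, abs_of_nonneg h]; ring
      · rw [if_neg (not_le.mpr h), abs_of_neg h]; ring
    rw [hsum]
    have ht2 : t ≤ (-S - c) / a i := min_le_right _ _
    have : a i * t ≤ -S - c := by
      nlinarith [(le_div_iff₀ hai).mp ht2]
    linarith
  · simp
end

section
/- Tightest axis-aligned over-approximation: for the box 𝒳 = {x : x̂ − ε ≤ x ≤ x̂ + ε} with ε > 0 and a feasible constraint aᵀx + c ≤ 0, the clipped box 𝒳′ defined by replacing, for each i with aᵢ ≠ 0, the corresponding bound by the closed-form clip of Theorem (upper bound if aᵢ > 0, lower bound if aᵢ < 0) satisfies: (i) 𝒳 ∩ {x : aᵀx + c ≤ 0} ⊆ 𝒳′ ⊆ 𝒳, and (ii) any axis-aligned box containing 𝒳 ∩ {x : aᵀx + c ≤ 0} contains 𝒳′ ... i.e., 𝒳′ is the smallest box containing the feasible set. -/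
open Finset

/-- The clipped box is the tightest axis-aligned over-approximation of the feasible set. -/
theorem clipped_box_tightest
    (n : ℕ) (a xhat ε : Fin n → ℝ) (c : ℝ)
    (hε : ∀ j, 0 < ε j)
    (hfeas : ∃ x : Fin n → ℝ, (∀ j, xhat j - ε j ≤ x j ∧ x j ≤ xhat j + ε j) ∧
      ∑ j, a j * x j + c ≤ 0)
    (clip : Fin n → ℝ)
    (hclip : ∀ i, clip i =
      (-(∑ j ∈ Finset.univ.erase i, (a j * xhat j - |a j| * ε j)) - c) / a i)
    (lo hi : Fin n → ℝ)
    (hlo : ∀ i, lo i = if a i < 0 then max (xhat i - ε i) (clip i) else xhat i - ε i)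
    (hhi : ∀ i, hi i = if 0 < a i then min (xhat i + ε i) (clip i) else xhat i + ε i) :
    -- (i) feasible set ⊆ clipped box ⊆ original box
    (∀ x : Fin n → ℝ, (∀ j, xhat j - ε j ≤ x j ∧ x j ≤ xhat j + ε j) →
      ∑ j, a j * x j + c ≤ 0 → ∀ i, lo i ≤ x i ∧ x i ≤ hi i) ∧
    (∀ i, xhat i - ε i ≤ lo i ∧ hi i ≤ xhat i + ε i) ∧
    -- (ii) any axis-aligned box containing the feasible set contains the clipped box
    (∀ lo' hi' : Fin n → ℝ,
      (∀ x : Fin n → ℝ, (∀ j, xhat j - ε j ≤ x j ∧ x j ≤ xhat j + ε j) →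
        ∑ j, a j * x j + c ≤ 0 → ∀ i, lo' i ≤ x i ∧ x i ≤ hi' i) →
      ∀ i, lo' i ≤ lo i ∧ hi i ≤ hi' i) := by
  set S : Fin n → ℝ := fun i => ∑ j ∈ Finset.univ.erase i, (a j * xhat j - |a j| * ε j)
    with hS
  have hSdef : ∀ i, S i = ∑ j ∈ Finset.univ.erase i, (a j * xhat j - |a j| * ε j) :=
    fun i => rfl
  have key : ∀ (x : Fin n → ℝ) (j : Fin n), xhat j - ε j ≤ x j → x j ≤ xhat j + ε j →
      a j * xhat j - |a j| * ε j ≤ a j * x j := by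
    intro x j h1 h2
    have habs : |x j - xhat j| ≤ ε j := abs_le.2 ⟨by linarith, by linarith⟩
    have e1 : -|a j * (x j - xhat j)| ≤ a j * (x j - xhat j) := neg_abs_le _
    have e2 : |a j * (x j - xhat j)| = |a j| * |x j - xhat j| := abs_mul _ _
    have e3 : |a j| * |x j - xhat j| ≤ |a j| * ε j :=
      mul_le_mul_of_nonneg_left habs (abs_nonneg _)
    have e4 : a j * (x j - xhat j) = a j * x j - a j * xhat j := by ring
    linarith
  have hsplit : ∀ i, a i * xhat i - |a i| * ε i + S i = ∑ j, (a j * xhat j - |a j| * ε j) := by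
    intro i
    rw [hSdef i]
    exact Finset.add_sum_erase _ (fun j => a j * xhat j - |a j| * ε j) (mem_univ i)
  have hmin : ∑ j, (a j * xhat j - |a j| * ε j) + c ≤ 0 := by
    obtain ⟨x0, hx0, hx0s⟩ := hfeas
    have := Finset.sum_le_sum (fun j (_ : j ∈ Finset.univ) => key x0 j (hx0 j).1 (hx0 j).2)
    linarith
  have haclip : ∀ i, a i ≠ 0 → a i * clip i = -S i - c := by
    intro i h
    rw [hclip i, mul_comm, hSdef]
    exact div_mul_cancel₀ _ h
  have hbox_clip_pos : ∀ i, 0 < a i → xhat i - ε i ≤ clip i := by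
    intro i h
    have h1 := hsplit i
    have h2 : a i * clip i = -S i - c := haclip i (ne_of_gt h)
    have h3 : |a i| = a i := abs_of_pos h
    have e : a i * (xhat i - ε i) = a i * xhat i - |a i| * ε i := by rw [h3]; ring
    have h4 : a i * (xhat i - ε i) ≤ a i * clip i := by linarith
    exact le_of_mul_le_mul_left h4 h
  have hbox_clip_neg : ∀ i, a i < 0 → clip i ≤ xhat i + ε i := by
    intro i h
    have h1 := hsplit i
    have h2 : a i * clip i = -S i - c := haclip i (ne_of_lt h)
    have h3 : |a i| = -a i := abs_of_neg h
    have e : a i * (xhat i + ε i) = a i * xhat i - |a i| * ε i := by rw [h3]; ring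
    have h4 : a i * (xhat i + ε i) ≤ a i * clip i := by linarith
    nlinarith [h4, h]
  have hmid : ∀ i, xhat i - ε i ≤ lo i ∧ hi i ≤ xhat i + ε i := by
    intro i
    rw [hlo i, hhi i]
    constructor
    · split_ifs
      · exact le_max_left _ _
      · exact le_refl _
    · split_ifs
      · exact min_le_left _ _
      · exact le_refl _
  have part1 : ∀ x : Fin n → ℝ, (∀ j, xhat j - ε j ≤ x j ∧ x j ≤ xhat j + ε j) →
      ∑ j, a j * x j + c ≤ 0 → ∀ i, lo i ≤ x i ∧ x i ≤ hi i := by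
    intro x hx hxs i
    have hSx : S i ≤ ∑ j ∈ Finset.univ.erase i, a j * x j := by
      rw [hSdef]
      exact Finset.sum_le_sum (fun j _ => key x j (hx j).1 (hx j).2)
    have hsx : a i * x i + ∑ j ∈ Finset.univ.erase i, a j * x j = ∑ j, a j * x j :=
      Finset.add_sum_erase _ (fun j => a j * x j) (mem_univ i)
    constructor
    · rw [hlo i]; split_ifs with h
      · refine max_le (hx i).1 ?_
        have hc := haclip i (ne_of_lt h)
        have h4 : a i * x i ≤ a i * clip i := by linarith
        nlinarith [h4, h]
      · exact (hx i).1
    · rw [hhi i]; split_ifs with h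
      · refine le_min (hx i).2 ?_
        have hc := haclip i (ne_of_gt h)
        have h4 : a i * x i ≤ a i * clip i := by linarith
        exact le_of_mul_le_mul_left h4 h
      · exact (hx i).2
  refine ⟨part1, hmid, ?_⟩
  intro lo' hi' hb i
  set m : Fin n → ℝ := fun j => if 0 ≤ a j then xhat j - ε j else xhat j + ε j with hm_def
  have hm : ∀ j, (xhat j - ε j ≤ m j ∧ m j ≤ xhat j + ε j) ∧
      a j * m j = a j * xhat j - |a j| * ε j := by
    intro j
    by_cases h : 0 ≤ a j
    · simp only [hm_def, if_pos h]
      exact ⟨⟨le_refl _, by linarith [hε j]⟩, by rw [abs_of_nonneg h]; ring⟩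
    · simp only [hm_def, if_neg h]
      push_neg at h
      exact ⟨⟨by linarith [hε j], le_refl _⟩, by rw [abs_of_neg h]; ring⟩
  have hw : ∀ t : ℝ, xhat i - ε i ≤ t → t ≤ xhat i + ε i → a i * t ≤ -S i - c →
      lo' i ≤ t ∧ t ≤ hi' i := by
    intro t ht1 ht2 ht3
    set w : Fin n → ℝ := fun j => if j = i then t else m j with hw_def
    have hwi : w i = t := by simp [hw_def]
    have hbox : ∀ j, xhat j - ε j ≤ w j ∧ w j ≤ xhat j + ε j := by
      intro j
      by_cases hj : j = i
      · subst hj; rw [hwi]; exact ⟨ht1, ht2⟩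
      · simp only [hw_def, if_neg hj]; exact (hm j).1
    have hsum : ∑ j, a j * w j + c ≤ 0 := by
      have h1 : a i * w i + ∑ j ∈ Finset.univ.erase i, a j * w j = ∑ j, a j * w j :=
        Finset.add_sum_erase _ (fun j => a j * w j) (mem_univ i)
      have h2 : ∑ j ∈ Finset.univ.erase i, a j * w j = S i := by
        rw [hSdef]
        refine Finset.sum_congr rfl (fun j hj => ?_)
        have hne : j ≠ i := (Finset.mem_erase.1 hj).1
        simp only [hw_def, if_neg hne]
        exact (hm j).2
      rw [hwi] at h1
      linarith
    have hres := hb w hbox hsum i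
    rw [hwi] at hres
    exact hres
  constructor
  · have h1 : xhat i - ε i ≤ lo i := (hmid i).1
    have h2 : lo i ≤ xhat i + ε i := by
      rw [hlo i]; split_ifs with h
      · exact max_le (by linarith [hε i]) (hbox_clip_neg i h)
      · linarith [hε i]
    have h3 : a i * lo i ≤ -S i - c := by
      rw [hlo i]; split_ifs with h
      · have hc := haclip i (ne_of_lt h)
        have hge : clip i ≤ max (xhat i - ε i) (clip i) := le_max_right _ _
        nlinarith [hge, h, hc]
      · push_neg at h
        have h3' : |a i| = a i := abs_of_nonneg h
        have e : a i * (xhat i - ε i) = a i * xhat i - |a i| * ε i := by rw [h3']; ring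
        linarith [hmin, hsplit i]
    exact (hw (lo i) h1 h2 h3).1
  · have h1 : hi i ≤ xhat i + ε i := (hmid i).2
    have h2 : xhat i - ε i ≤ hi i := by
      rw [hhi i]; split_ifs with h
      · exact le_min (by linarith [hε i]) (hbox_clip_pos i h)
      · linarith [hε i]
    have h3 : a i * hi i ≤ -S i - c := by
      rw [hhi i]; split_ifs with h
      · have hc := haclip i (ne_of_gt h)
        have hle : min (xhat i + ε i) (clip i) ≤ clip i := min_le_right _ _
        nlinarith [hle, h, hc]
      · push_neg at h
        have h3' : |a i| = -a i := abs_of_nonpos h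
        have e : a i * (xhat i + ε i) = a i * xhat i - |a i| * ε i := by rw [h3']; ring
        linarith [hmin, hsplit i]
    exact (hw (hi i) h2 h1 h3).2
end

section
/- Infeasibility detection via clipping: if applying the closed-form clipping updates for constraint aᵀx + c ≤ 0 to the box {x : x̂ − ε ≤ x ≤ x̂ + ε} produces, in some coordinate i, a clipped upper bound strictly less than the lower bound x̂ᵢ − εᵢ (or a clipped lower bound strictly greater than x̂ᵢ + εᵢ), then no x in the box satisfies aᵀx + c ≤ 0. -/
open Finset

/-- Infeasibility detection: if some clipped bound crosses the opposite original bound,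
the constraint is infeasible over the box. -/
theorem clipping_detects_infeasibility
    (n : ℕ) (a xhat ε : Fin n → ℝ) (c : ℝ)
    (hε : ∀ j, 0 ≤ ε j)
    (clip : Fin n → ℝ)
    (hclip : ∀ i, clip i =
      (-(∑ j ∈ Finset.univ.erase i, (a j * xhat j - |a j| * ε j)) - c) / a i)
    (i : Fin n)
    (hcross : (0 < a i ∧ clip i < xhat i - ε i) ∨ (a i < 0 ∧ xhat i + ε i < clip i)) :
    ¬ ∃ x : Fin n → ℝ, (∀ j, xhat j - ε j ≤ x j ∧ x j ≤ xhat j + ε j) ∧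
      ∑ j, a j * x j + c ≤ 0 := by
  rintro ⟨x, hx, hle⟩
  have key : ∀ j, a j * xhat j - |a j| * ε j ≤ a j * x j := by
    intro j
    have h1 := (hx j).1; have h2 := (hx j).2
    have habs : |x j - xhat j| ≤ ε j := abs_le.mpr ⟨by linarith, by linarith⟩
    have h3 : -(|a j| * ε j) ≤ a j * (x j - xhat j) := by
      calc -(|a j| * ε j) ≤ -|a j * (x j - xhat j)| := by
            rw [abs_mul]
            nlinarith [abs_nonneg (a j)]
        _ ≤ a j * (x j - xhat j) := neg_abs_le _
    nlinarith
  set S := ∑ j ∈ Finset.univ.erase i, (a j * xhat j - |a j| * ε j) with hS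
  have hsum : S ≤ ∑ j ∈ Finset.univ.erase i, a j * x j :=
    Finset.sum_le_sum (fun j _ => key j)
  have hsplit : ∑ j, a j * x j = a i * x i + ∑ j ∈ Finset.univ.erase i, a j * x j :=
    (Finset.add_sum_erase _ _ (Finset.mem_univ i)).symm
  rcases hcross with ⟨hai, hc⟩ | ⟨hai, hc⟩
  · have hne : a i ≠ 0 := ne_of_gt hai
    have hclipi : a i * clip i = -S - c := by
      rw [hclip i, ← hS]; field_simp
    have hxi : clip i < x i := lt_of_lt_of_le (by linarith [hc]) (hx i).1
    have : a i * clip i < a i * x i := by nlinarith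
    linarith
  · have hne : a i ≠ 0 := ne_of_lt hai
    have hclipi : a i * clip i = -S - c := by
      rw [hclip i, ← hS]; field_simp
    have hxi : x i < clip i := lt_of_le_of_lt (hx i).2 hc
    have : a i * clip i < a i * x i := by nlinarith
    linarith
end

section
/- Soundness of multi-constraint parallel clipping: let 𝒳 = {x : x̂ − ε ≤ x ≤ x̂ + ε} with ε ≥ 0, and let A ∈ ℝ^{m×n}, c ∈ ℝ^m. If x ∈ 𝒳 satisfies A x + c ≤ 0 componentwise, then x lies in the box obtained by applying the single-constraint closed-form clipping update (with respect to the original box 𝒳) independently for every row k of A and every coordinate i, and taking the tightest resulting bound in each coordinate. -/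
open Finset

/-- Soundness of multi-constraint parallel clipping: any point of the box satisfying all
constraints respects every single-constraint clipping update (hence their tightest
combination). -/
theorem parallel_clipping_sound
    (n m : ℕ) (A : Fin m → Fin n → ℝ) (c : Fin m → ℝ) (xhat ε : Fin n → ℝ)
    (hε : ∀ j, 0 ≤ ε j)
    (clip : Fin m → Fin n → ℝ)
    (hclip : ∀ k i, clip k i =
      (-(∑ j ∈ Finset.univ.erase i, (A k j * xhat j - |A k j| * ε j)) - c k) / A k i)
    (x : Fin n → ℝ)
    (hx : ∀ j, xhat j - ε j ≤ x j ∧ x j ≤ xhat j + ε j)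
    (hcon : ∀ k, ∑ j, A k j * x j + c k ≤ 0) :
    ∀ k i, (0 < A k i → x i ≤ clip k i) ∧ (A k i < 0 → clip k i ≤ x i) := by
  intro k i
  have hlow : ∀ j, A k j * xhat j - |A k j| * ε j ≤ A k j * x j := by
    intro j
    have h1 : |x j - xhat j| ≤ ε j := by
      have := hx j; rw [abs_le]; constructor <;> linarith [this.1, this.2]
    have h2 : |A k j * (x j - xhat j)| ≤ |A k j| * ε j := by
      rw [abs_mul]
      exact mul_le_mul_of_nonneg_left h1 (abs_nonneg _)
    have h3 : -(|A k j| * ε j) ≤ A k j * (x j - xhat j) := (abs_le.mp h2).1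
    nlinarith
  have hsum : ∑ j ∈ Finset.univ.erase i, (A k j * xhat j - |A k j| * ε j) ≤
      ∑ j ∈ Finset.univ.erase i, A k j * x j :=
    Finset.sum_le_sum fun j _ => hlow j
  have hsplit : A k i * x i + ∑ j ∈ Finset.univ.erase i, A k j * x j
      = ∑ j, A k j * x j := by
    rw [← Finset.add_sum_erase _ _ (Finset.mem_univ i)]
  have hkey : A k i * x i ≤
      -(∑ j ∈ Finset.univ.erase i, (A k j * xhat j - |A k j| * ε j)) - c k := by
    have := hcon k
    linarith
  rw [hclip k i]
  constructor
  · intro hpos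
    rw [le_div_iff₀ hpos]
    linarith [mul_comm (x i) (A k i)]
  · intro hneg
    rw [div_le_iff_of_neg hneg]
    linarith [mul_comm (x i) (A k i)]
end
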